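/- For all b > 0 and c ∈ (0,1), ∑_{n=1}^∞ ((√b c)^n / (n-1)!) (−1)^n J_{1/2 − n}(2√b) = −(b^{1/4} c / √(1-c)) · cos(2√b √(1-c)) / √π, where J_α is the Bessel function of the first kind. -/

import Mathlib

open MeasureTheory Real Set

/-- Bessel function of the first kind of order `α`. -/
noncomputable def besselJ (α z : ℝ) : ℝ :=
  ∑' n : ℕ, (-1) ^ n / ((n.factorial : ℝ) * Real.Gamma ((n : ℝ) + α + 1)) *
    (z / 2) ^ (2 * (n : ℝ) + α)

/-- Struve function of order `α`. -/
noncomputable def struveH (α z : ℝ) : ℝ :=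
  ∑' n : ℕ, (-1) ^ n / (Real.Gamma ((n : ℝ) + 3 / 2) * Real.Gamma ((n : ℝ) + α + 3 / 2)) *
    (z / 2) ^ (2 * (n : ℝ) + α + 1)

open Filter

noncomputable def gbc (a : ℝ) (n : ℕ) : ℝ := (∏ i ∈ Finset.range n, (a - i)) / n.factorial

lemma gbc_zero (a : ℝ) : gbc a 0 = 1 := by simp [gbc]

lemma gbc_succ (a : ℝ) (n : ℕ) : ((n : ℝ) + 1) * gbc a (n + 1) = gbc a n * (a - n) := by
  unfold gbc
  rw [Finset.prod_range_succ, Nat.factorial_succ]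
  push_cast
  have h1 : (n.factorial : ℝ) ≠ 0 := Nat.cast_ne_zero.2 n.factorial_pos.ne'
  field_simp

lemma summable_q (a ρ : ℝ) (h0 : 0 ≤ ρ) (h1 : ρ < 1) :
    Summable (fun n : ℕ => ((n : ℝ) + 1) * |gbc a (n + 1)| * ρ ^ n) := by
  set r' := (ρ + 1) / 2 with hr'def
  have hr' : r' < 1 := by rw [hr'def]; linarith
  have hρr' : ρ < r' := by rw [hr'def]; linarith
  apply summable_of_ratio_norm_eventually_le hr'
  have htend : Tendsto (fun n : ℕ => ((n : ℝ) + 1) * (r' - ρ)) atTop atTop := by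
    apply Tendsto.atTop_mul_const (by linarith)
    exact tendsto_atTop_add_const_right _ _ tendsto_natCast_atTop_atTop
  filter_upwards [htend.eventually_ge_atTop (|a| * ρ)] with n hn
  have key : ((n : ℝ) + 2) * |gbc a (n + 2)| = |gbc a (n + 1)| * |a - ((n : ℝ) + 1)| := by
    have h := gbc_succ a (n + 1)
    push_cast at h
    have h' : ((n : ℝ) + 2) * gbc a (n + 2) = gbc a (n + 1) * (a - ((n : ℝ) + 1)) := by
      rw [show ((n : ℝ) + 2) = (n : ℝ) + 1 + 1 by ring, show n + 2 = n + 1 + 1 by ring]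
      exact h
    calc ((n : ℝ) + 2) * |gbc a (n + 2)| = |((n : ℝ) + 2) * gbc a (n + 2)| := by
          rw [abs_mul, abs_of_nonneg (by positivity : (0:ℝ) ≤ (n : ℝ) + 2)]
      _ = |gbc a (n + 1) * (a - ((n : ℝ) + 1))| := by rw [h']
      _ = _ := abs_mul _ _
  have hstep : |a - ((n : ℝ) + 1)| * ρ ≤ r' * ((n : ℝ) + 1) := by
    have h2 : |a - ((n : ℝ) + 1)| ≤ |a| + ((n : ℝ) + 1) := by
      have h3 := abs_add_le a (-(((n : ℝ) + 1)))
      simp only [← sub_eq_add_neg, abs_neg] at h3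
      rwa [abs_of_nonneg (by positivity : (0:ℝ) ≤ (n : ℝ) + 1)] at h3
    nlinarith [abs_nonneg (a - ((n:ℝ)+1))]
  have hnn : ∀ m : ℕ, 0 ≤ ((m : ℝ) + 1) * |gbc a (m + 1)| * ρ ^ m := fun m => by positivity
  rw [Real.norm_eq_abs, Real.norm_eq_abs, abs_of_nonneg (hnn (n + 1)), abs_of_nonneg (hnn n)]
  push_cast
  calc ((n : ℝ) + 1 + 1) * |gbc a (n + 1 + 1)| * ρ ^ (n + 1)
      = (|gbc a (n + 1)| * ρ ^ n) * (|a - ((n : ℝ) + 1)| * ρ) := by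
        rw [show n + 1 + 1 = n + 2 by ring,
          show ((n : ℝ) + 1 + 1) * |gbc a (n + 2)| * ρ ^ (n + 1)
            = (((n : ℝ) + 2) * |gbc a (n + 2)|) * ρ ^ (n + 1) by ring, key, pow_succ]
        ring
    _ ≤ (|gbc a (n + 1)| * ρ ^ n) * (r' * ((n : ℝ) + 1)) :=
        mul_le_mul_of_nonneg_left hstep (by positivity)
    _ = r' * (((n : ℝ) + 1) * |gbc a (n + 1)| * ρ ^ n) := by ring

lemma summable_gbc (a x : ℝ) (hx : |x| < 1) : Summable (fun n : ℕ => gbc a n * x ^ n) := by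
  apply Summable.of_norm
  apply (summable_nat_add_iff 1).mp
  apply Summable.of_nonneg_of_le (fun n => norm_nonneg _)
    (f := fun n : ℕ => |x| * (((n : ℝ) + 1) * |gbc a (n + 1)| * |x| ^ n))
  · intro n
    rw [Real.norm_eq_abs, abs_mul, abs_pow, pow_succ]
    have h1 : (1:ℝ) ≤ (n : ℝ) + 1 := by
      have : (0:ℝ) ≤ (n : ℝ) := Nat.cast_nonneg n
      linarith
    calc |gbc a (n + 1)| * (|x| ^ n * |x|)
        = (|gbc a (n + 1)| * |x| ^ n) * |x| := by ring
      _ ≤ (((n : ℝ) + 1) * |gbc a (n + 1)| * |x| ^ n) * |x| := by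
          apply mul_le_mul_of_nonneg_right _ (abs_nonneg x)
          nlinarith [mul_nonneg (mul_nonneg (Nat.cast_nonneg (α := ℝ) n)
            (abs_nonneg (gbc a (n + 1)))) (pow_nonneg (abs_nonneg x) n)]
      _ = |x| * (((n : ℝ) + 1) * |gbc a (n + 1)| * |x| ^ n) := by ring
  · exact (summable_q a |x| (abs_nonneg x) hx).mul_left _

lemma summable_dgbc (a r : ℝ) (h0 : 0 ≤ r) (hr : r < 1) :
    Summable (fun n : ℕ => |gbc a n| * ((n : ℝ) * r ^ (n - 1))) := by
  apply (summable_nat_add_iff 1).mp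
  simp only [Nat.add_sub_cancel]
  apply Summable.congr (summable_q a r h0 hr)
  intro n
  push_cast
  ring

lemma hasSum_gbc (a x : ℝ) (hx1 : -1 < x) (hx2 : x ≤ 0) :
    HasSum (fun n : ℕ => gbc a n * x ^ n) ((1 + x) ^ a) := by
  set r : ℝ := (1 - x) / 2 with hrdef
  have hr0 : 0 < r := by rw [hrdef]; linarith
  have hr1 : r < 1 := by rw [hrdef]; linarith
  have hxr : -r < x := by rw [hrdef]; linarith
  have hxr' : x < r := by rw [hrdef]; linarith
  set t : Set ℝ := Ioo (-r) r with htdef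
  have hmem : ∀ y ∈ t, |y| < r := fun y hy => abs_lt.2 ⟨hy.1, hy.2⟩
  set u : ℕ → ℝ := fun n => |gbc a n| * ((n : ℝ) * r ^ (n - 1)) with hudef
  have hu : Summable u := summable_dgbc a r hr0.le hr1
  set d : ℕ → ℝ → ℝ := fun n y => gbc a n * ((n : ℝ) * y ^ (n - 1)) with hddef
  have hderiv : ∀ n : ℕ, ∀ y ∈ t, HasDerivAt (fun z => gbc a n * z ^ n) (d n y) y :=
    fun n y _ => (hasDerivAt_pow n y).const_mul (gbc a n)
  have hbound : ∀ n : ℕ, ∀ y ∈ t, ‖d n y‖ ≤ u n := by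
    intro n y hy
    rw [hddef, hudef, Real.norm_eq_abs, abs_mul, abs_mul, abs_pow]
    have h1 : |y| ^ (n - 1) ≤ r ^ (n - 1) := pow_le_pow_left₀ (abs_nonneg y) (hmem y hy).le _
    have h2 : |(n : ℝ)| = (n : ℝ) := abs_of_nonneg (Nat.cast_nonneg n)
    rw [h2]
    apply mul_le_mul_of_nonneg_left _ (abs_nonneg _)
    exact mul_le_mul_of_nonneg_left h1 (Nat.cast_nonneg n)
  have h0t : (0 : ℝ) ∈ t := ⟨by linarith, hr0⟩
  have hsum0 : Summable fun n => gbc a n * (0:ℝ) ^ n := by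
    apply summable_of_ne_finset_zero (s := {0})
    intro n hn
    simp only [Finset.mem_singleton] at hn
    simp [zero_pow hn]
  have hF : ∀ y ∈ t, HasDerivAt (fun z => ∑' n, gbc a n * z ^ n) (∑' n, d n y) y :=
    fun y hy => hasDerivAt_tsum_of_isPreconnected hu isOpen_Ioo (convex_Ioo _ _).isPreconnected
      hderiv hbound h0t hsum0 hy
  set F : ℝ → ℝ := fun z => ∑' n, gbc a n * z ^ n with hFdef
  set D : ℝ → ℝ := fun y => ∑' n, d n y with hDdef
  -- the ODE
  have key : ∀ y ∈ t, (1 + y) * D y = a * F y := by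
    intro y hy
    have hyr := hmem y hy
    have hFy : HasSum (fun n => gbc a n * y ^ n) (F y) :=
      (summable_gbc a y (hyr.trans hr1)).hasSum
    have hDsummable : Summable (fun n => d n y) :=
      Summable.of_norm_bounded hu (fun n => hbound n y hy)
    have hDy : HasSum (fun n => d n y) (D y) := hDsummable.hasSum
    have h1 : HasSum (fun n => d (n + 1) y) (D y) := by
      have := (hasSum_nat_add_iff' 1).2 hDy
      simpa [hddef] using this
    have heq : (fun n : ℕ => d (n + 1) y) = fun n : ℕ => (a - n) * (gbc a n * y ^ n) := by
      funext n
      simp only [hddef, Nat.add_sub_cancel]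
      push_cast
      rw [show gbc a (n + 1) * (((n : ℝ) + 1) * y ^ n)
          = (((n : ℝ) + 1) * gbc a (n + 1)) * y ^ n by ring, gbc_succ]
      ring
    rw [heq] at h1
    have h2 : HasSum (fun n : ℕ => a * (gbc a n * y ^ n) - y * d n y) (a * F y - y * D y) :=
      (hFy.mul_left a).sub (hDy.mul_left y)
    have heq2 : (fun n : ℕ => a * (gbc a n * y ^ n) - y * d n y)
        = fun n : ℕ => (a - n) * (gbc a n * y ^ n) := by
      funext n
      simp only [hddef]
      cases n with
      | zero => simp
      | succ m =>
        simp only [Nat.add_sub_cancel]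
        push_cast
        rw [pow_succ]
        ring
    rw [heq2] at h2
    have := h1.unique h2
    linarith
  -- the function g = F * (1+·)^(-a) is constant on [x, 0]
  have hsub : Icc x 0 ⊆ t := fun y hy => ⟨lt_of_lt_of_le hxr hy.1, lt_of_le_of_lt hy.2 hr0⟩
  have h1y : ∀ y ∈ Icc x 0, 0 < 1 + y := fun y hy => by
    have := hy.1; nlinarith
  set g : ℝ → ℝ := fun y => F y * (1 + y) ^ (-a) with hgdef
  have hgderiv : ∀ y ∈ Icc x 0, HasDerivAt g 0 y := by
    intro y hy
    have hyt := hsub hy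
    have h1y' := h1y y hy
    have hrpow : HasDerivAt (fun z : ℝ => (1 + z) ^ (-a)) (-a * (1 + y) ^ (-a - 1) * 1) y := by
      have h := Real.hasDerivAt_rpow_const (x := 1 + y) (p := -a) (Or.inl h1y'.ne')
      exact h.comp y ((hasDerivAt_id y).const_add 1)
    have hprod := (hF y hyt).mul hrpow
    have hsplit : (1 + y) ^ (-a) = (1 + y) * (1 + y) ^ (-a - 1) := by
      rw [show -a = 1 + (-a - 1) by ring, Real.rpow_add h1y', Real.rpow_one]
      ring_nf
    have hzero : D y * (1 + y) ^ (-a) + F y * (-a * (1 + y) ^ (-a - 1) * 1) = 0 := by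
      rw [hsplit, show D y * ((1 + y) * (1 + y) ^ (-a - 1)) = ((1 + y) * D y) * (1 + y) ^ (-a - 1) by ring,
        key y hyt]
      ring
    rw [hzero] at hprod
    exact hprod
  have hconst := constant_of_has_deriv_right_zero
    (fun y hy => (hgderiv y hy).continuousAt.continuousWithinAt)
    (fun y hy => ((hgderiv y (Ico_subset_Icc_self hy)).hasDerivWithinAt))
  have hg0 : g 0 = g x := hconst 0 (by constructor <;> linarith)
  have hF0 : F 0 = 1 := by
    have : F 0 = gbc a 0 * (0:ℝ) ^ 0 := by
      apply tsum_eq_single 0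
      intro n hn
      simp [zero_pow hn]
    rw [this, gbc_zero]
    norm_num
  have hgx : F x * (1 + x) ^ (-a) = 1 := by
    have : g 0 = 1 := by
      simp only [hgdef, hF0, add_zero, Real.one_rpow, one_mul]
    rw [hg0] at this
    exact this
  have h1x : 0 < 1 + x := by linarith
  have hFx : F x = (1 + x) ^ a := by
    have hne : (1 + x) ^ a ≠ 0 := (Real.rpow_pos_of_pos h1x a).ne'
    rw [Real.rpow_neg h1x.le] at hgx
    field_simp at hgx
    linarith [hgx]
  have := (summable_gbc a x (abs_lt.2 ⟨hx1, lt_of_le_of_lt hx2 one_pos⟩)).hasSum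
  rwa [show (∑' n, gbc a n * x ^ n) = F x from rfl, hFx] at this

lemma Gamma_nat_add_half (k : ℕ) :
    Real.Gamma ((k : ℝ) + 1 / 2) * (4 ^ k * k.factorial) = (2 * k).factorial * Real.sqrt π := by
  induction k with
  | zero =>
    rw [show ((0:ℕ) : ℝ) + 1 / 2 = 1 / 2 by norm_num, Real.Gamma_one_half_eq]
    simp
  | succ n ih =>
    have hne : ((n : ℝ) + 1 / 2) ≠ 0 := by positivity
    have hG : Real.Gamma ((n : ℝ) + 1 + 1 / 2) = ((n : ℝ) + 1 / 2) * Real.Gamma ((n : ℝ) + 1 / 2) := by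
      rw [show (n : ℝ) + 1 + 1 / 2 = ((n : ℝ) + 1 / 2) + 1 by ring, Real.Gamma_add_one hne]
    have hfac : ((2 * (n + 1)).factorial : ℝ)
        = (2 * (n : ℝ) + 2) * ((2 * (n : ℝ) + 1) * ((2 * n).factorial : ℝ)) := by
      rw [show 2 * (n + 1) = (2 * n + 1) + 1 by ring, Nat.factorial_succ, Nat.factorial_succ]
      push_cast
      ring
    push_cast [Nat.factorial_succ]
    rw [hfac, hG, pow_succ]
    linear_combination (4 * ((n : ℝ) + 1) * ((n : ℝ) + 1 / 2)) * ih

lemma Gamma_nat_add_half_le (m : ℕ) : Real.Gamma ((m : ℝ) + 1 / 2) ≤ Real.sqrt π * m.factorial := by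
  induction m with
  | zero =>
    rw [show ((0:ℕ) : ℝ) + 1 / 2 = 1 / 2 by norm_num, Real.Gamma_one_half_eq]
    simp
  | succ n ih =>
    have hne : ((n : ℝ) + 1 / 2) ≠ 0 := by positivity
    have hG : Real.Gamma ((n : ℝ) + 1 + 1 / 2) = ((n : ℝ) + 1 / 2) * Real.Gamma ((n : ℝ) + 1 / 2) := by
      rw [show (n : ℝ) + 1 + 1 / 2 = ((n : ℝ) + 1 / 2) + 1 by ring, Real.Gamma_add_one hne]
    have hpos : 0 < Real.Gamma ((n : ℝ) + 1 / 2) := Real.Gamma_pos_of_pos (by positivity)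
    have h1 : (0:ℝ) < Real.sqrt π := Real.sqrt_pos.2 Real.pi_pos
    have h2 : (0:ℝ) < (n.factorial : ℝ) := Nat.cast_pos.2 n.factorial_pos
    push_cast [Nat.factorial_succ]
    rw [hG]
    nlinarith [ih]

lemma Gamma_half_sub (m : ℕ) :
    Real.Gamma (1 / 2 - (m : ℝ)) * Real.Gamma ((m : ℝ) + 1 / 2) = (-1) ^ m * π := by
  induction m with
  | zero =>
    simp only [Nat.cast_zero, sub_zero, zero_add, pow_zero, one_mul]
    rw [Real.Gamma_one_half_eq]
    exact Real.mul_self_sqrt Real.pi_pos.le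
  | succ n ih =>
    have hne : (1 / 2 - ((n : ℝ) + 1)) ≠ 0 := by
      have : (0:ℝ) ≤ (n : ℝ) := Nat.cast_nonneg n
      intro h; linarith
    have hG1 : Real.Gamma (1 / 2 - (n : ℝ))
        = (1 / 2 - ((n : ℝ) + 1)) * Real.Gamma (1 / 2 - ((n : ℝ) + 1)) := by
      rw [show (1:ℝ) / 2 - (n : ℝ) = (1 / 2 - ((n : ℝ) + 1)) + 1 by ring, Real.Gamma_add_one hne]
    have hne2 : ((n : ℝ) + 1 / 2) ≠ 0 := by positivity
    have hG2 : Real.Gamma ((n : ℝ) + 1 + 1 / 2) = ((n : ℝ) + 1 / 2) * Real.Gamma ((n : ℝ) + 1 / 2) := by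
      rw [show (n : ℝ) + 1 + 1 / 2 = ((n : ℝ) + 1 / 2) + 1 by ring, Real.Gamma_add_one hne2]
    rw [hG1] at ih
    push_cast [hG2, pow_succ]
    linear_combination -ih

lemma Gamma_shift_ne (k n : ℕ) : Real.Gamma ((k : ℝ) - n + 1 / 2) ≠ 0 := by
  rcases le_or_gt n k with h | h
  · have heq : (k : ℝ) - n + 1 / 2 = ((k - n : ℕ) : ℝ) + 1 / 2 := by
      rw [Nat.cast_sub h]; try ring
    rw [heq]
    exact (Real.Gamma_pos_of_pos (by positivity)).ne'
  · have heq : (k : ℝ) - n + 1 / 2 = 1 / 2 - ((n - k : ℕ) : ℝ) := by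
      rw [Nat.cast_sub h.le]; try ring
    rw [heq]
    intro h0
    have hh := Gamma_half_sub (n - k)
    rw [h0, zero_mul] at hh
    rcases mul_eq_zero.mp hh.symm with h1 | h1
    · exact pow_ne_zero _ (neg_ne_zero.2 one_ne_zero) h1
    · exact Real.pi_pos.ne' h1

lemma prod_mul_Gamma (k n : ℕ) :
    (∏ i ∈ Finset.range n, (((k : ℝ) - 1 / 2) - i)) * Real.Gamma ((k : ℝ) - n + 1 / 2)
      = Real.Gamma ((k : ℝ) + 1 / 2) := by
  induction n with
  | zero => simp
  | succ m ih =>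
    have hne : (k : ℝ) - (m + 1) + 1 / 2 ≠ 0 := by
      intro h
      have h2 : (2 * (k : ℝ)) = 2 * (m : ℝ) + 1 := by linarith
      have h3 : (2 * k : ℕ) = 2 * m + 1 := by exact_mod_cast h2
      omega
    have hG : Real.Gamma ((k : ℝ) - m + 1 / 2)
        = ((k : ℝ) - (m + 1) + 1 / 2) * Real.Gamma ((k : ℝ) - (m + 1) + 1 / 2) := by
      rw [show (k : ℝ) - m + 1 / 2 = ((k : ℝ) - (m + 1) + 1 / 2) + 1 by ring,
        Real.Gamma_add_one hne]
    rw [Finset.prod_range_succ, ← ih, hG]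
    push_cast
    ring

lemma master_bound (n k : ℕ) :
    Real.sqrt π ≤ 4 ^ k * n.factorial * |Real.Gamma ((k : ℝ) - n + 1 / 2)| := by
  have hsπ : (0:ℝ) < Real.sqrt π := Real.sqrt_pos.2 Real.pi_pos
  have h4 : (1:ℝ) ≤ 4 ^ k := one_le_pow₀ (by norm_num)
  have hnf : (1:ℝ) ≤ n.factorial := by exact_mod_cast n.factorial_pos
  rcases le_or_gt n k with h | h
  · set m := k - n with hm
    have heq : (k : ℝ) - n + 1 / 2 = ((m : ℕ) : ℝ) + 1 / 2 := by
      rw [hm, Nat.cast_sub h]; try ring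
    have hpos : 0 < Real.Gamma ((m : ℝ) + 1 / 2) := Real.Gamma_pos_of_pos (by positivity)
    rw [heq, abs_of_pos hpos]
    have e := _root_.Gamma_nat_add_half m
    have hmf : (1:ℝ) ≤ m.factorial := by exact_mod_cast m.factorial_pos
    have hff : (m.factorial : ℝ) ≤ ((2 * m).factorial : ℝ) := by
      exact_mod_cast Nat.factorial_le (by omega)
    -- √π ≤ 4^m Γ(m+1/2)
    have h1 : Real.sqrt π * m.factorial ≤ 4 ^ m * Real.Gamma ((m : ℝ) + 1 / 2) * m.factorial := by
      nlinarith [e, hsπ]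
    have h2 : Real.sqrt π ≤ 4 ^ m * Real.Gamma ((m : ℝ) + 1 / 2) := by
      have hmf0 : (0:ℝ) < m.factorial := by linarith
      exact le_of_mul_le_mul_right (by linarith [h1]) hmf0
    have h4m : (4:ℝ) ^ m ≤ 4 ^ k := pow_le_pow_right₀ (by norm_num) (by omega)
    calc Real.sqrt π ≤ 4 ^ m * Real.Gamma ((m : ℝ) + 1 / 2) := h2
      _ ≤ 4 ^ k * Real.Gamma ((m : ℝ) + 1 / 2) := mul_le_mul_of_nonneg_right h4m hpos.le
      _ ≤ 4 ^ k * n.factorial * Real.Gamma ((m : ℝ) + 1 / 2) := by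
          nlinarith [mul_pos (show (0:ℝ) < 4 ^ k by positivity) hpos]
  · set m := n - k with hm
    have heq : (k : ℝ) - n + 1 / 2 = 1 / 2 - ((m : ℕ) : ℝ) := by
      rw [hm, Nat.cast_sub h.le]; try ring
    rw [heq]
    have hpos : 0 < Real.Gamma ((m : ℝ) + 1 / 2) := Real.Gamma_pos_of_pos (by positivity)
    have habs : |Real.Gamma (1 / 2 - (m : ℝ))| * Real.Gamma ((m : ℝ) + 1 / 2) = π := by
      have hh := Gamma_half_sub m
      have hc := congrArg abs hh
      rw [abs_mul, abs_of_pos hpos, abs_mul, abs_pow, abs_neg, abs_one, one_pow, one_mul,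
        abs_of_pos Real.pi_pos] at hc
      exact hc
    have hup : Real.Gamma ((m : ℝ) + 1 / 2) ≤ Real.sqrt π * m.factorial := Gamma_nat_add_half_le m
    have hff : (m.factorial : ℝ) ≤ (n.factorial : ℝ) := by
      exact_mod_cast Nat.factorial_le (by omega)
    have hππ : Real.sqrt π * Real.sqrt π = π := Real.mul_self_sqrt Real.pi_pos.le
    apply le_of_mul_le_mul_right _ hpos
    calc Real.sqrt π * Real.Gamma ((m : ℝ) + 1 / 2)
        ≤ Real.sqrt π * (Real.sqrt π * m.factorial) := mul_le_mul_of_nonneg_left hup hsπ.le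
      _ = π * m.factorial := by linear_combination (m.factorial : ℝ) * hππ
      _ ≤ π * n.factorial := mul_le_mul_of_nonneg_left hff Real.pi_pos.le
      _ = 1 * ((n.factorial : ℝ) * π) := by ring
      _ ≤ 4 ^ k * ((n.factorial : ℝ) * π) := mul_le_mul_of_nonneg_right h4 (by positivity)
      _ = 4 ^ k * n.factorial * |Real.Gamma (1 / 2 - (m : ℝ))| * Real.Gamma ((m : ℝ) + 1 / 2) := by
          rw [show (4:ℝ) ^ k * n.factorial * |Real.Gamma (1 / 2 - (m : ℝ))|
              * Real.Gamma ((m : ℝ) + 1 / 2)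
            = (4:ℝ) ^ k * n.factorial
              * (|Real.Gamma (1 / 2 - (m : ℝ))| * Real.Gamma ((m : ℝ) + 1 / 2)) by ring, habs]
          ring

noncomputable def FF (b c : ℝ) (n k : ℕ) : ℝ :=
  (-1) ^ (n + 1) * (-1) ^ k * (c ^ (n + 1) * (b ^ ((1 : ℝ) / 4) * b ^ k)) /
    ((n.factorial : ℝ) * k.factorial * Real.Gamma ((k : ℝ) - n + 1 / 2))

noncomputable def CC (b c : ℝ) (k : ℕ) : ℝ :=
  (-1) ^ (k + 1) * c * (b ^ ((1 : ℝ) / 4) * b ^ k) /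
    ((k.factorial : ℝ) * Real.Gamma ((k : ℝ) + 1 / 2))

lemma step1 (b c : ℝ) (hb : 0 < b) (n : ℕ) :
    (Real.sqrt b * c) ^ (n + 1) / (n.factorial : ℝ) * (-1 : ℝ) ^ (n + 1) *
      besselJ (1 / 2 - ((n : ℝ) + 1)) (2 * Real.sqrt b) = ∑' k : ℕ, FF b c n k := by
  have hs : 0 < Real.sqrt b := Real.sqrt_pos.mpr hb
  rw [besselJ, ← tsum_mul_left]
  apply tsum_congr
  intro k
  have h2s : 2 * Real.sqrt b / 2 = Real.sqrt b := by ring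
  rw [h2s]
  have hΓ : (k : ℝ) + (1 / 2 - ((n : ℝ) + 1)) + 1 = (k : ℝ) - n + 1 / 2 := by ring
  rw [hΓ]
  have hpow : Real.sqrt b ^ (n + 1) * Real.sqrt b ^ (2 * (k : ℝ) + (1 / 2 - ((n : ℝ) + 1)))
      = b ^ ((1 : ℝ) / 4) * b ^ k := by
    have h1 : Real.sqrt b ^ (n + 1) = Real.sqrt b ^ (((n : ℕ) + 1 : ℕ) : ℝ) := by
      rw [Real.rpow_natCast]
    rw [h1, ← Real.rpow_add hs,
      show (((n : ℕ) + 1 : ℕ) : ℝ) + (2 * (k : ℝ) + (1 / 2 - ((n : ℝ) + 1)))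
        = 2 * (k : ℝ) + 1 / 2 by push_cast; ring,
      Real.sqrt_eq_rpow, ← Real.rpow_natCast b k, ← Real.rpow_mul hb.le,
      show (1 / 2 : ℝ) * (2 * (k : ℝ) + 1 / 2) = ((k : ℕ) : ℝ) + 1 / 4 by ring,
      Real.rpow_add hb]
    ring
  rw [FF, mul_pow]
  calc Real.sqrt b ^ (n + 1) * c ^ (n + 1) / (n.factorial : ℝ) * (-1 : ℝ) ^ (n + 1) *
        ((-1) ^ k / ((k.factorial : ℝ) * Real.Gamma ((k : ℝ) - n + 1 / 2)) *
          Real.sqrt b ^ (2 * (k : ℝ) + (1 / 2 - ((n : ℝ) + 1))))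
      = (Real.sqrt b ^ (n + 1) * Real.sqrt b ^ (2 * (k : ℝ) + (1 / 2 - ((n : ℝ) + 1)))) *
          (c ^ (n + 1) * (-1 : ℝ) ^ (n + 1) * (-1) ^ k /
            ((n.factorial : ℝ) * ((k.factorial : ℝ) * Real.Gamma ((k : ℝ) - n + 1 / 2)))) := by
        ring
    _ = (b ^ ((1 : ℝ) / 4) * b ^ k) *
          (c ^ (n + 1) * (-1 : ℝ) ^ (n + 1) * (-1) ^ k /
            ((n.factorial : ℝ) * ((k.factorial : ℝ) * Real.Gamma ((k : ℝ) - n + 1 / 2)))) := by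
        rw [hpow]
    _ = (-1) ^ (n + 1) * (-1) ^ k * (c ^ (n + 1) * (b ^ ((1 : ℝ) / 4) * b ^ k)) /
        ((n.factorial : ℝ) * k.factorial * Real.Gamma ((k : ℝ) - n + 1 / 2)) := by
        ring

set_option maxHeartbeats 1000000 in
lemma FF_summable (b c : ℝ) (hb : 0 < b) (hc0 : 0 < c) (hc1 : c < 1) :
    Summable (Function.uncurry (FF b c)) := by
  have hsπ : (0 : ℝ) < Real.sqrt π := Real.sqrt_pos.2 Real.pi_pos
  apply Summable.of_norm_bounded
    (g := fun p : ℕ × ℕ => (b ^ ((1 : ℝ) / 4) * c / Real.sqrt π) *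
      (c ^ p.1 * ((4 * b) ^ p.2 / (p.2.factorial : ℝ))))
  · apply Summable.mul_left
    exact (summable_geometric_of_lt_one hc0.le hc1).mul_of_nonneg
      (Real.summable_pow_div_factorial (4 * b)) (fun n => by positivity)
      (fun k => by positivity)
  · rintro ⟨n, k⟩
    have hΓne := Gamma_shift_ne k n
    have hΓpos : 0 < |Real.Gamma ((k : ℝ) - n + 1 / 2)| := abs_pos.2 hΓne
    have hnf : (0 : ℝ) < n.factorial := by exact_mod_cast n.factorial_pos
    have hkf : (0 : ℝ) < k.factorial := by exact_mod_cast k.factorial_pos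
    have habs : ‖Function.uncurry (FF b c) (n, k)‖
        = c ^ (n + 1) * (b ^ ((1 : ℝ) / 4) * b ^ k) /
          ((n.factorial : ℝ) * k.factorial * |Real.Gamma ((k : ℝ) - n + 1 / 2)|) := by
      rw [Function.uncurry, FF]
      rw [Real.norm_eq_abs, abs_div, abs_mul, abs_mul, abs_pow, abs_pow, abs_neg, abs_one,
        one_pow, one_pow, one_mul, one_mul, abs_of_nonneg (by positivity : (0:ℝ) ≤ c ^ (n+1) * (b ^ ((1:ℝ)/4) * b ^ k)),
        abs_mul, abs_mul, abs_of_nonneg hnf.le, abs_of_nonneg hkf.le]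
    rw [habs]
    have hD : (0:ℝ) < (n.factorial : ℝ) * k.factorial * |Real.Gamma ((k : ℝ) - n + 1 / 2)| := by
      positivity
    rw [div_le_iff₀ hD]
    have hB : b ^ ((1 : ℝ) / 4) * c / Real.sqrt π * (c ^ n * ((4 * b) ^ k / (k.factorial : ℝ))) *
          ((n.factorial : ℝ) * k.factorial * |Real.Gamma ((k : ℝ) - n + 1 / 2)|)
        = (c ^ (n + 1) * (b ^ ((1 : ℝ) / 4) * b ^ k)) *
            ((4 ^ k * (n.factorial : ℝ) * |Real.Gamma ((k : ℝ) - n + 1 / 2)|) / Real.sqrt π) := by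
      rw [mul_pow]
      field_simp
      ring
    rw [hB]
    apply le_mul_of_one_le_right (by positivity)
    rw [le_div_iff₀ hsπ, one_mul]
    exact master_bound n k

lemma inner_hasSum (b c : ℝ) (hb : 0 < b) (hc0 : 0 < c) (hc1 : c < 1) (k : ℕ) :
    HasSum (fun n : ℕ => FF b c n k) (CC b c k * (1 - c) ^ ((k : ℝ) - 1 / 2)) := by
  have h := (hasSum_gbc ((k : ℝ) - 1 / 2) (-c) (by linarith) (by linarith)).mul_left (CC b c k)
  rw [show (1 : ℝ) + -c = 1 - c by ring] at h
  apply h.congr_fun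
  intro n
  have hP := prod_mul_Gamma k n
  have hΓ1 := Gamma_shift_ne k n
  have hΓ2 : (0:ℝ) < Real.Gamma ((k : ℝ) + 1 / 2) := Real.Gamma_pos_of_pos (by positivity)
  have hnf : (0 : ℝ) < n.factorial := by exact_mod_cast n.factorial_pos
  have hkf : (0 : ℝ) < k.factorial := by exact_mod_cast k.factorial_pos
  have hPne : (∏ i ∈ Finset.range n, ((k : ℝ) - 1 / 2 - i)) ≠ 0 := by
    apply Finset.prod_ne_zero_iff.mpr
    intro i _ h0
    have h2 : (2 * (k : ℝ)) = 2 * i + 1 := by linarith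
    have h3 : (2 * k : ℕ) = 2 * i + 1 := by exact_mod_cast h2
    omega
  have hΓ1eq : Real.Gamma ((k : ℝ) - n + 1 / 2)
      = Real.Gamma ((k : ℝ) + 1 / 2) / (∏ i ∈ Finset.range n, ((k : ℝ) - 1 / 2 - i)) := by
    rw [eq_div_iff hPne]
    linear_combination hP
  rw [FF, CC, gbc, neg_pow, hΓ1eq]
  set P := ∏ i ∈ Finset.range n, ((k : ℝ) - 1 / 2 - i) with hPdef
  ring_nf
  simp only [inv_inv]
  ring

lemma final_pointwise (b c : ℝ) (hb : 0 < b) (hc0 : 0 < c) (hc1 : c < 1) (k : ℕ) :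
    CC b c k * (1 - c) ^ ((k : ℝ) - 1 / 2)
      = (-(b ^ ((1 : ℝ) / 4) * c / Real.sqrt (1 - c)) / Real.sqrt π) *
          ((-1) ^ k * (2 * Real.sqrt b * Real.sqrt (1 - c)) ^ (2 * k) /
            ((2 * k).factorial : ℝ)) := by
  have ht : 0 < 1 - c := by linarith
  have hΓ2 : (0:ℝ) < Real.Gamma ((k : ℝ) + 1 / 2) := Real.Gamma_pos_of_pos (by positivity)
  have hsπ : (0:ℝ) < Real.sqrt π := Real.sqrt_pos.2 Real.pi_pos
  have hst : (0:ℝ) < Real.sqrt (1 - c) := Real.sqrt_pos.2 ht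
  have hkf : (0:ℝ) < k.factorial := by exact_mod_cast k.factorial_pos
  have h2kf : (0:ℝ) < (2 * k).factorial := by exact_mod_cast (2 * k).factorial_pos
  have h3 := _root_.Gamma_nat_add_half k
  have h1 : (1 - c) ^ ((k : ℝ) - 1 / 2) = (1 - c) ^ k / Real.sqrt (1 - c) := by
    rw [Real.rpow_sub ht, Real.rpow_natCast, ← Real.sqrt_eq_rpow]
  have h2 : (2 * Real.sqrt b * Real.sqrt (1 - c)) ^ (2 * k) = 4 ^ k * (b ^ k * (1 - c) ^ k) := by
    rw [pow_mul, show (2 * Real.sqrt b * Real.sqrt (1 - c)) ^ 2 = 4 * (b * (1 - c)) by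
      rw [mul_pow, mul_pow, Real.sq_sqrt hb.le, Real.sq_sqrt ht.le]; ring,
      mul_pow, mul_pow]
  rw [CC, h1, h2]
  set G2 := Real.Gamma ((k : ℝ) + 1 / 2) with hG2
  have h3' : Real.Gamma ((k : ℝ) + 1 / 2) * (4 ^ k * k.factorial)
      = ((k * 2).factorial : ℝ) * Real.sqrt π := by
    rw [show k * 2 = 2 * k by ring]; exact h3
  field_simp
  linear_combination ((-1 : ℝ) ^ k) * h3


theorem sum_besselJ_eq_cos (b c : ℝ) (hb : 0 < b) (hc : c ∈ Set.Ioo (0:ℝ) 1) :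
    ∑' n : ℕ,
        (Real.sqrt b * c) ^ (n + 1) / (n.factorial : ℝ) * (-1 : ℝ) ^ (n + 1) *
          besselJ (1 / 2 - ((n : ℝ) + 1)) (2 * Real.sqrt b)
      = -(b ^ ((1 : ℝ) / 4) * c / Real.sqrt (1 - c)) *
          Real.cos (2 * Real.sqrt b * Real.sqrt (1 - c)) / Real.sqrt Real.pi := by
  obtain ⟨hc0, hc1⟩ := hc
  calc ∑' n : ℕ,
        (Real.sqrt b * c) ^ (n + 1) / (n.factorial : ℝ) * (-1 : ℝ) ^ (n + 1) *
          besselJ (1 / 2 - ((n : ℝ) + 1)) (2 * Real.sqrt b)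
      = ∑' n : ℕ, ∑' k : ℕ, FF b c n k := tsum_congr (step1 b c hb)
    _ = ∑' k : ℕ, ∑' n : ℕ, FF b c n k := (Summable.tsum_comm (FF_summable b c hb hc0 hc1)).symm
    _ = ∑' k : ℕ, CC b c k * (1 - c) ^ ((k : ℝ) - 1 / 2) :=
        tsum_congr (fun k => (inner_hasSum b c hb hc0 hc1 k).tsum_eq)
    _ = ∑' k : ℕ, (-(b ^ ((1 : ℝ) / 4) * c / Real.sqrt (1 - c)) / Real.sqrt π) *
          ((-1) ^ k * (2 * Real.sqrt b * Real.sqrt (1 - c)) ^ (2 * k) /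
            ((2 * k).factorial : ℝ)) := tsum_congr (final_pointwise b c hb hc0 hc1)
    _ = (-(b ^ ((1 : ℝ) / 4) * c / Real.sqrt (1 - c)) / Real.sqrt π) *
          Real.cos (2 * Real.sqrt b * Real.sqrt (1 - c)) := by
        rw [tsum_mul_left, ← Real.cos_eq_tsum]
    _ = -(b ^ ((1 : ℝ) / 4) * c / Real.sqrt (1 - c)) *
          Real.cos (2 * Real.sqrt b * Real.sqrt (1 - c)) / Real.sqrt Real.pi := by
        ring
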